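/- Let K ≥ 1 and N ≥ 1 be integers and K_1,…,K_N nonnegative integers with Σ K_i = K. Define X_1 = {0} if K_1 = 0 and X_1 = {±(m − 1/2) : m = 1,…,2^{K_1−1}} if K_1 ≥ 1; for i ≥ 2, define X_i = {0} if K_i = 0 and X_i = {±(m − 1/2)·2^{Σ_{n<i} K_n} : m = 1,…,2^{K_i−1}} if K_i ≥ 1. Then the 2^K-ary PAM constellation G = {±(m − 1/2) : m = 1,…,2^{K−1}} equals the sumset of the X_i, and the decomposition is unique: every g ∈ G can be written in exactly one way as g = Σ_{i=1}^N x_i with x_i ∈ X_i. -/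

import Mathlib

-- bound: sum of mixed-radix digits is less than the total weight
lemma pam_sumBound (d : ℕ → ℕ) : ∀ N : ℕ, ∀ a : ℕ → ℕ, (∀ i < N, a i < 2 ^ d i) →
    ∑ i ∈ Finset.range N, a i * 2 ^ (∑ n ∈ Finset.range i, d n)
      < 2 ^ (∑ n ∈ Finset.range N, d n) := by
  intro N
  induction N with
  | zero => intro a _; simp
  | succ N ih =>
    intro a ha
    rw [Finset.sum_range_succ, Finset.sum_range_succ (f := d), pow_add]
    have h1 := ih a (fun i hi => ha i (by omega))
    have h2 : a N ≤ 2 ^ d N - 1 := by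
      have := ha N (by omega); omega
    have h3 : a N * 2 ^ (∑ n ∈ Finset.range N, d n)
        ≤ (2 ^ d N - 1) * 2 ^ (∑ n ∈ Finset.range N, d n) :=
      Nat.mul_le_mul_right _ h2
    have h4 : 0 < 2 ^ d N := Nat.pow_pos (by norm_num)
    have h6 : (2 ^ d N - 1) * 2 ^ (∑ n ∈ Finset.range N, d n)
        = 2 ^ (∑ n ∈ Finset.range N, d n) * 2 ^ d N - 2 ^ (∑ n ∈ Finset.range N, d n) := by
      rw [Nat.sub_one_mul, mul_comm]
    have h7 : 2 ^ (∑ n ∈ Finset.range N, d n) ≤ 2 ^ (∑ n ∈ Finset.range N, d n) * 2 ^ d N :=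
      Nat.le_mul_of_pos_right _ h4
    omega

lemma pam_sumExists (d : ℕ → ℕ) : ∀ N : ℕ, ∀ t : ℕ, t < 2 ^ (∑ n ∈ Finset.range N, d n) →
    ∃ a : ℕ → ℕ, (∀ i, a i < 2 ^ d i) ∧
      ∑ i ∈ Finset.range N, a i * 2 ^ (∑ n ∈ Finset.range i, d n) = t := by
  intro N
  induction N with
  | zero =>
    intro t ht
    refine ⟨fun _ => 0, fun i => Nat.pow_pos (by norm_num), ?_⟩
    simp at ht ⊢; omega
  | succ N ih =>
    intro t ht
    set w := 2 ^ (∑ n ∈ Finset.range N, d n) with hw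
    have hwpos : 0 < w := Nat.pow_pos (by norm_num)
    have htw : t < w * 2 ^ d N := by
      rwa [Finset.sum_range_succ, pow_add] at ht
    have hq : t / w < 2 ^ d N := Nat.div_lt_of_lt_mul (by linarith [htw])
    have hr : t % w < w := Nat.mod_lt _ hwpos
    obtain ⟨a, ha, hsa⟩ := ih (t % w) hr
    refine ⟨Function.update a N (t / w), ?_, ?_⟩
    · intro i
      rcases eq_or_ne i N with rfl | hne
      · simpa using hq
      · simpa [Function.update_of_ne hne] using ha i
    · rw [Finset.sum_range_succ]
      have hcongr : ∑ i ∈ Finset.range N, Function.update a N (t / w) i * 2 ^ (∑ n ∈ Finset.range i, d n)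
          = ∑ i ∈ Finset.range N, a i * 2 ^ (∑ n ∈ Finset.range i, d n) := by
        refine Finset.sum_congr rfl fun i hi => ?_
        rw [Function.update_of_ne (by simp at hi; omega)]
      rw [hcongr, hsa, Function.update_self]
      exact Nat.mod_add_div' t w

lemma pam_sumUnique (d : ℕ → ℕ) : ∀ N : ℕ, ∀ a b : ℕ → ℕ,
    (∀ i < N, a i < 2 ^ d i) → (∀ i < N, b i < 2 ^ d i) →
    (∑ i ∈ Finset.range N, a i * 2 ^ (∑ n ∈ Finset.range i, d n)
      = ∑ i ∈ Finset.range N, b i * 2 ^ (∑ n ∈ Finset.range i, d n)) →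
    ∀ i < N, a i = b i := by
  intro N
  induction N with
  | zero => intro a b _ _ _ i hi; omega
  | succ N ih =>
    intro a b ha hb hsum
    set w := 2 ^ (∑ n ∈ Finset.range N, d n) with hw
    have hwpos : 0 < w := Nat.pow_pos (by norm_num)
    rw [Finset.sum_range_succ, Finset.sum_range_succ] at hsum
    have hba := pam_sumBound d N a (fun i hi => ha i (by omega))
    have hbb := pam_sumBound d N b (fun i hi => hb i (by omega))
    rw [← hw] at hba hbb
    have haN : a N = b N := by
      have h1 : (∑ i ∈ Finset.range N, a i * 2 ^ (∑ n ∈ Finset.range i, d n) + a N * w) / w = a N := by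
        rw [Nat.add_mul_div_right _ _ hwpos, Nat.div_eq_of_lt hba, Nat.zero_add]
      have h2 : (∑ i ∈ Finset.range N, b i * 2 ^ (∑ n ∈ Finset.range i, d n) + b N * w) / w = b N := by
        rw [Nat.add_mul_div_right _ _ hwpos, Nat.div_eq_of_lt hbb, Nat.zero_add]
      rw [← h1, ← h2, hsum]
    have hrest : ∑ i ∈ Finset.range N, a i * 2 ^ (∑ n ∈ Finset.range i, d n)
        = ∑ i ∈ Finset.range N, b i * 2 ^ (∑ n ∈ Finset.range i, d n) := by
      rw [haN] at hsum; omega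
    intro i hi
    rcases Nat.lt_succ_iff_lt_or_eq.mp hi with h | rfl
    · exact ih a b (fun j hj => ha j (by omega)) (fun j hj => hb j (by omega)) hrest i h
    · exact haN


lemma pam_bridge (k : ℕ) (hk : 1 ≤ k) (c : ℚ) (x : ℚ) :
    (∃ m : ℕ, 1 ≤ m ∧ m ≤ 2 ^ (k - 1) ∧
      (x = ((m : ℚ) - 1/2) * c ∨ x = -(((m : ℚ) - 1/2) * c))) ↔
    (∃ a : ℕ, a < 2 ^ k ∧ x = ((a : ℚ) - (2 ^ k - 1)/2) * c) := by
  have hkk : k - 1 + 1 = k := by omega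
  have h2n : 2 ^ k = 2 * 2 ^ (k - 1) := by rw [← pow_succ', hkk]
  have h2q : (2 : ℚ) ^ k = 2 * 2 ^ (k - 1) := by
    rw [← pow_succ', hkk]
  constructor
  · rintro ⟨m, hm1, hm2, h | h⟩
    · refine ⟨m - 1 + 2 ^ (k - 1), by omega, ?_⟩
      have : ((m - 1 + 2 ^ (k - 1) : ℕ) : ℚ) = (m : ℚ) - 1 + 2 ^ (k - 1) := by
        push_cast [hm1]; ring
      rw [this, h, h2q]; ring
    · refine ⟨2 ^ (k - 1) - m, by omega, ?_⟩
      have : ((2 ^ (k - 1) - m : ℕ) : ℚ) = (2 : ℚ) ^ (k - 1) - m := by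
        push_cast [hm2]; ring
      rw [this, h, h2q]; ring
  · rintro ⟨a, ha, rfl⟩
    rcases le_or_gt (2 ^ (k - 1)) a with h | h
    · refine ⟨a + 1 - 2 ^ (k - 1), by omega, by omega, Or.inl ?_⟩
      have : ((a + 1 - 2 ^ (k - 1) : ℕ) : ℚ) = (a : ℚ) + 1 - 2 ^ (k - 1) := by
        rw [Nat.cast_sub (by omega)]; push_cast; ring
      rw [this, h2q]; ring
    · refine ⟨2 ^ (k - 1) - a, by omega, by omega, Or.inr ?_⟩
      have : ((2 ^ (k - 1) - a : ℕ) : ℚ) = (2 : ℚ) ^ (k - 1) - a := by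
        push_cast [h.le]; ring
      rw [this, h2q]; ring


theorem stmt1 (N K : ℕ) (hN : 1 ≤ N) (hK : 1 ≤ K)
    (Ki : Fin N → ℕ) (hsum : ∑ i, Ki i = K)
    (X : Fin N → Set ℚ)
    (hX : ∀ i, X i =
      if Ki i = 0 then {0}
      else {x : ℚ | ∃ m : ℕ, 1 ≤ m ∧ m ≤ 2 ^ (Ki i - 1) ∧
        (x = ((m : ℚ) - 1/2) * 2 ^ (∑ n ∈ Finset.Iio i, Ki n) ∨
         x = -(((m : ℚ) - 1/2) * 2 ^ (∑ n ∈ Finset.Iio i, Ki n)))})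
    (G : Set ℚ)
    (hG : G = {x : ℚ | ∃ m : ℕ, 1 ≤ m ∧ m ≤ 2 ^ (K - 1) ∧
      (x = (m : ℚ) - 1/2 ∨ x = -((m : ℚ) - 1/2))}) :
    G = {x : ℚ | ∃ f : Fin N → ℚ, (∀ i, f i ∈ X i) ∧ x = ∑ i, f i} ∧
    ∀ g ∈ G, ∃! f : {f : Fin N → ℚ // ∀ i, f i ∈ X i}, ∑ i, f.1 i = g := by
  classical
  set Kext : ℕ → ℕ := fun n => if h : n < N then Ki ⟨n, h⟩ else 0 with hKext
  -- total
  have hKtot : ∑ n ∈ Finset.range N, Kext n = K := by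
    rw [← Fin.sum_univ_eq_sum_range, ← hsum]
    exact Finset.sum_congr rfl fun i _ => by simp [hKext, i.isLt]
  -- partial sums over Fin vs ℕ
  have hS : ∀ i : Fin N, ∑ n ∈ Finset.Iio i, Ki n = ∑ n ∈ Finset.range i.val, Kext n := by
    intro i
    rw [← Nat.Iio_eq_range, ← Fin.map_valEmbedding_Iio, Finset.sum_map]
    exact Finset.sum_congr rfl fun n _ => by simp [hKext, n.isLt]
  -- digit description of X i
  have hXa : ∀ i : Fin N, X i = {x : ℚ | ∃ a : ℕ, a < 2 ^ Ki i ∧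
      x = ((a : ℚ) - ((2:ℚ) ^ Ki i - 1)/2) * 2 ^ (∑ n ∈ Finset.Iio i, Ki n)} := by
    intro i
    rw [hX i]
    split_ifs with h
    · ext x
      simp only [Set.mem_singleton_iff, Set.mem_setOf_eq, h]
      constructor
      · rintro rfl; exact ⟨0, by norm_num⟩
      · rintro ⟨a, ha, rfl⟩
        interval_cases a
        norm_num
    · ext x
      exact pam_bridge (Ki i) (by omega) _ x
  -- digit description of G
  have hGa : ∀ x : ℚ, x ∈ G ↔ ∃ t : ℕ, t < 2 ^ K ∧ x = (t : ℚ) - ((2:ℚ) ^ K - 1)/2 := by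
    intro x
    rw [hG]
    have h := pam_bridge K hK 1 x
    simp only [mul_one] at h
    exact h
  -- telescoping
  have hTel : ∑ i ∈ Finset.range N, ((2:ℚ) ^ Kext i - 1) * 2 ^ (∑ n ∈ Finset.range i, Kext n)
      = 2 ^ K - 1 := by
    have h := Finset.sum_range_sub (fun i => (2:ℚ) ^ (∑ n ∈ Finset.range i, Kext n)) N
    rw [hKtot] at h
    simp only [Finset.range_zero, Finset.sum_empty, pow_zero] at h
    rw [← h]
    refine Finset.sum_congr rfl fun i _ => ?_
    rw [Finset.sum_range_succ, pow_add]
    ring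
  -- sum formula
  have hsumf : ∀ a : ℕ → ℕ,
      ∑ i : Fin N, (((a i.val : ℚ) - ((2:ℚ) ^ Ki i - 1)/2) * 2 ^ (∑ n ∈ Finset.Iio i, Ki n))
        = ((∑ i ∈ Finset.range N, a i * 2 ^ (∑ n ∈ Finset.range i, Kext n) : ℕ) : ℚ)
          - ((2:ℚ) ^ K - 1)/2 := by
    intro a
    have h1 : ∑ i : Fin N, (((a i.val : ℚ) - ((2:ℚ) ^ Ki i - 1)/2) * 2 ^ (∑ n ∈ Finset.Iio i, Ki n))
        = ∑ n ∈ Finset.range N,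
            (((a n : ℚ) - ((2:ℚ) ^ Kext n - 1)/2) * 2 ^ (∑ m ∈ Finset.range n, Kext m)) := by
      rw [← Fin.sum_univ_eq_sum_range
        (fun n => ((a n : ℚ) - ((2:ℚ) ^ Kext n - 1)/2) * 2 ^ (∑ m ∈ Finset.range n, Kext m)) N]
      refine Finset.sum_congr rfl fun i _ => ?_
      rw [hS i]
      congr 2
      simp [hKext, i.isLt]
    rw [h1]
    have h2 : ∀ n, ((a n : ℚ) - ((2:ℚ) ^ Kext n - 1)/2) * 2 ^ (∑ m ∈ Finset.range n, Kext m)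
        = (a n : ℚ) * 2 ^ (∑ m ∈ Finset.range n, Kext m)
          - ((2:ℚ) ^ Kext n - 1) * 2 ^ (∑ m ∈ Finset.range n, Kext m) / 2 := fun n => by ring
    simp only [h2]
    rw [Finset.sum_sub_distrib, ← Finset.sum_div, hTel]
    push_cast
    ring
  -- existence construction : for every t < 2^K a decomposition
  have hExist : ∀ t : ℕ, t < 2 ^ K → ∃ f : Fin N → ℚ, (∀ i, f i ∈ X i) ∧
      ∑ i, f i = (t : ℚ) - ((2:ℚ) ^ K - 1)/2 := by
    intro t ht
    obtain ⟨a, ha, hta⟩ := pam_sumExists Kext N t (by rwa [hKtot])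
    refine ⟨fun i => ((a i.val : ℚ) - ((2:ℚ) ^ Ki i - 1)/2) * 2 ^ (∑ n ∈ Finset.Iio i, Ki n),
      fun i => ?_, ?_⟩
    · rw [hXa i]
      exact ⟨a i.val, by simpa [hKext, i.isLt] using ha i.val, rfl⟩
    · rw [hsumf a, hta]
  -- digit extraction from a decomposition
  have hDecomp : ∀ f : Fin N → ℚ, (∀ i, f i ∈ X i) → ∃ a : ℕ → ℕ,
      (∀ n, a n < 2 ^ Kext n) ∧
      (∀ i : Fin N, f i = ((a i.val : ℚ) - ((2:ℚ) ^ Ki i - 1)/2) * 2 ^ (∑ n ∈ Finset.Iio i, Ki n)) ∧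
      ∑ i, f i = ((∑ i ∈ Finset.range N, a i * 2 ^ (∑ n ∈ Finset.range i, Kext n) : ℕ) : ℚ)
          - ((2:ℚ) ^ K - 1)/2 := by
    intro f hf
    have h : ∀ i : Fin N, ∃ b : ℕ, b < 2 ^ Ki i ∧
        f i = ((b : ℚ) - ((2:ℚ) ^ Ki i - 1)/2) * 2 ^ (∑ n ∈ Finset.Iio i, Ki n) := by
      intro i
      have := hf i
      rw [hXa i] at this
      exact this
    choose af haf hfa using h
    refine ⟨fun n => if h : n < N then af ⟨n, h⟩ else 0, ?_, ?_, ?_⟩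
    · intro n
      by_cases h : n < N
      · simpa [hKext, h] using haf ⟨n, h⟩
      · simp [hKext, h]
    · intro i
      simpa [i.isLt] using hfa i
    · rw [← hsumf (fun n => if h : n < N then af ⟨n, h⟩ else 0)]
      refine Finset.sum_congr rfl fun i _ => ?_
      simpa [i.isLt] using hfa i
  constructor
  · ext x
    simp only [Set.mem_setOf_eq]
    constructor
    · intro hx
      obtain ⟨t, ht, rfl⟩ := (hGa x).mp hx
      obtain ⟨f, hf, hfs⟩ := hExist t ht
      exact ⟨f, hf, hfs.symm⟩
    · rintro ⟨f, hf, rfl⟩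
      obtain ⟨a, ha, _, hfs⟩ := hDecomp f hf
      rw [hGa]
      refine ⟨∑ i ∈ Finset.range N, a i * 2 ^ (∑ n ∈ Finset.range i, Kext n), ?_, hfs⟩
      rw [← hKtot]
      exact pam_sumBound Kext N a fun i _ => ha i
  · intro g hg
    obtain ⟨t, ht, rfl⟩ := (hGa g).mp hg
    obtain ⟨f, hf, hfs⟩ := hExist t ht
    obtain ⟨a, ha, hfa, hfsa⟩ := hDecomp f hf
    have hta : ∑ i ∈ Finset.range N, a i * 2 ^ (∑ n ∈ Finset.range i, Kext n) = t := by
      have := hfsa.symm.trans hfs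
      have h2 : ((∑ i ∈ Finset.range N, a i * 2 ^ (∑ n ∈ Finset.range i, Kext n) : ℕ) : ℚ)
          = (t : ℚ) := by linarith [this]
      exact_mod_cast h2
    refine ⟨⟨f, hf⟩, hfs, ?_⟩
    rintro ⟨f', hf'⟩ hfs'
    obtain ⟨b, hb, hfb, hfsb⟩ := hDecomp f' hf'
    have htb : ∑ i ∈ Finset.range N, b i * 2 ^ (∑ n ∈ Finset.range i, Kext n) = t := by
      have := hfsb.symm.trans hfs'
      have h2 : ((∑ i ∈ Finset.range N, b i * 2 ^ (∑ n ∈ Finset.range i, Kext n) : ℕ) : ℚ)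
          = (t : ℚ) := by linarith [this]
      exact_mod_cast h2
    have hab : ∀ i < N, b i = a i :=
      pam_sumUnique Kext N b a (fun i _ => hb i) (fun i _ => ha i) (htb.trans hta.symm)
    refine Subtype.ext (funext fun i => ?_)
    show f' i = f i
    rw [hfb i, hfa i, hab i.val i.isLt]
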